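/- Let F be a d-regular locally sparse graph on [n], let k ∈ ℕ, and let F' be the induced subgraph of F on [k]. Then for every integer v with 3 ≤ v ≤ n−3, the number of closed subgraphs of F contained in F' with v vertices is at most 2dk/3. -/

import Mathlib

open SimpleGraph

/-- The edge boundary of a subgraph `H` of `G`: edges of `G` with one endpoint in `H.verts`
and the other outside. -/
def edgeBoundary {V : Type*} (G : SimpleGraph V) (H : G.Subgraph) : Set (Sym2 V) :=
  {e | ∃ u v, e = s(u, v) ∧ G.Adj u v ∧ u ∈ H.verts ∧ v ∉ H.verts}

/-- `G` is `d`-regular. -/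
def IsRegularGraph {V : Type*} (G : SimpleGraph V) (d : ℕ) : Prop :=
  ∀ v, (G.neighborSet v).ncard = d

/-- `G` on `n` vertices is locally sparse: every subgraph on between 3 and `n - 3`
vertices has edge boundary of size at least `d + 1`. -/
def LocallySparse {n : ℕ} (G : SimpleGraph (Fin n)) (d : ℕ) : Prop :=
  ∀ H : G.Subgraph, 3 ≤ H.verts.ncard → H.verts.ncard ≤ n - 3 →
    d + 1 ≤ (edgeBoundary G H).ncard

/-- `Δ = d + 1` for odd `d`, `Δ = d + 2` for even `d`. -/
def Delta (d : ℕ) : ℕ := if Odd d then d + 1 else d + 2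

/-- A closed subgraph: an induced subgraph whose edge boundary has size exactly `Δ`. -/
def IsClosedSubgraph {V : Type*} (G : SimpleGraph V) (d : ℕ) (H : G.Subgraph) : Prop :=
  H.IsInduced ∧ (edgeBoundary G H).ncard = Delta d

open Finset

open scoped Classical in
/-- number of ordered adjacent pairs from X to Y -/
noncomputable def EE {n : ℕ} (G : SimpleGraph (Fin n)) (X Y : Finset (Fin n)) : ℕ :=
  ((Finset.univ : Finset (Fin n × Fin n)).filter
    (fun p => G.Adj p.1 p.2 ∧ p.1 ∈ X ∧ p.2 ∈ Y)).card

variable {n : ℕ} {G : SimpleGraph (Fin n)}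

open scoped Classical

lemma EE_comm (X Y : Finset (Fin n)) : EE G X Y = EE G Y X := by
  unfold EE
  apply Finset.card_bij' (fun p _ => Prod.swap p) (fun p _ => Prod.swap p) <;>
    simp [And.comm, SimpleGraph.adj_comm]

lemma EE_union_left {X₁ X₂ : Finset (Fin n)} (h : Disjoint X₁ X₂) (Y : Finset (Fin n)) :
    EE G (X₁ ∪ X₂) Y = EE G X₁ Y + EE G X₂ Y := by
  unfold EE
  rw [← Finset.card_union_of_disjoint]
  · congr 1
    ext p
    simp only [Finset.mem_filter, Finset.mem_union, Finset.mem_univ, true_and]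
    tauto
  · rw [Finset.disjoint_left]
    intro p hp hp'
    simp only [Finset.mem_filter] at hp hp'
    exact Finset.disjoint_left.mp h hp.2.2.1 hp'.2.2.1

lemma EE_union_right (X : Finset (Fin n)) {Y₁ Y₂ : Finset (Fin n)} (h : Disjoint Y₁ Y₂) :
    EE G X (Y₁ ∪ Y₂) = EE G X Y₁ + EE G X Y₂ := by
  rw [EE_comm, EE_union_left h, EE_comm, EE_comm Y₂]

lemma EE_singleton_self (x : Fin n) : EE G {x} {x} = 0 := by
  unfold EE
  rw [Finset.card_eq_zero]
  ext p
  simp only [Finset.mem_filter, Finset.mem_singleton, Finset.notMem_empty, iff_false,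
    Finset.mem_univ, true_and]
  rintro ⟨hadj, h1, h2⟩
  rw [h1, h2] at hadj
  exact G.ne_of_adj hadj rfl

lemma EE_pos {X Y : Finset (Fin n)} {x y : Fin n} (hx : x ∈ X) (hy : y ∈ Y)
    (h : G.Adj x y) : 1 ≤ EE G X Y := by
  rw [Nat.one_le_iff_ne_zero]
  unfold EE
  simp only [ne_eq, Finset.card_eq_zero]
  intro hempty
  have : (x, y) ∈ ((Finset.univ : Finset (Fin n × Fin n)).filter
      (fun p => G.Adj p.1 p.2 ∧ p.1 ∈ X ∧ p.2 ∈ Y)) := by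
    simp [hx, hy, h]
  rw [hempty] at this
  exact absurd this (Finset.notMem_empty _)

lemma EE_singleton_univ {d : ℕ} (hreg : IsRegularGraph G d) (x : Fin n) :
    EE G {x} Finset.univ = d := by
  have h1 : G.neighborSet x = ↑(Finset.univ.filter (fun y => G.Adj x y)) := by
    ext y; simp [SimpleGraph.mem_neighborSet]
  have h2 := hreg x
  rw [h1, Set.ncard_coe_finset] at h2
  rw [← h2]
  unfold EE
  have himg : ((Finset.univ : Finset (Fin n × Fin n)).filter
      (fun p => G.Adj p.1 p.2 ∧ p.1 ∈ ({x} : Finset (Fin n)) ∧ p.2 ∈ Finset.univ)) =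
      (Finset.univ.filter (fun y => G.Adj x y)).image (fun y => (x, y)) := by
    ext p
    simp only [Finset.mem_filter, Finset.mem_univ, true_and, Finset.mem_singleton,
      Finset.mem_image]
    constructor
    · rintro ⟨hadj, h1, -⟩
      exact ⟨p.2, by rw [← h1]; exact hadj, by rw [← h1]⟩
    · rintro ⟨y, hy, rfl⟩
      exact ⟨hy, rfl, trivial⟩
  rw [himg, Finset.card_image_of_injective _ (fun a b hab => (Prod.ext_iff.mp hab).2)]

lemma EE_univ_right {d : ℕ} (hreg : IsRegularGraph G d) (X : Finset (Fin n)) :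
    EE G X Finset.univ = d * X.card := by
  induction X using Finset.induction_on with
  | empty =>
    rw [Finset.card_empty, Nat.mul_zero]
    unfold EE
    rw [Finset.card_eq_zero]
    ext p
    simp
  | @insert a s ha ih =>
    have h1 : insert a s = {a} ∪ s := Finset.insert_eq a s
    rw [h1, EE_union_left (by simpa using ha), ih, EE_singleton_univ hreg,
      Finset.card_union_of_disjoint (by simpa using ha)]
    rw [Finset.card_singleton, Nat.mul_add, Nat.mul_one, Nat.add_comm]

lemma EE_self_even (X : Finset (Fin n)) : Even (EE G X X) := by
  unfold EE
  set P := fun p : Fin n × Fin n => G.Adj p.1 p.2 ∧ p.1 ∈ X ∧ p.2 ∈ X with hP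
  have hsplit : (Finset.univ.filter P) =
      (Finset.univ.filter (fun p => P p ∧ p.1 < p.2)) ∪
      (Finset.univ.filter (fun p => P p ∧ p.2 < p.1)) := by
    ext p
    simp only [Finset.mem_filter, Finset.mem_union, Finset.mem_univ, true_and]
    constructor
    · intro hp
      rcases lt_or_gt_of_ne (G.ne_of_adj hp.1) with h | h
      · exact Or.inl ⟨hp, h⟩
      · exact Or.inr ⟨hp, h⟩
    · rintro (⟨hp, _⟩ | ⟨hp, _⟩) <;> exact hp
  have hdisj : Disjoint (Finset.univ.filter (fun p => P p ∧ p.1 < p.2))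
      (Finset.univ.filter (fun p => P p ∧ p.2 < p.1)) := by
    rw [Finset.disjoint_left]
    intro p hp hp'
    simp only [Finset.mem_filter] at hp hp'
    exact absurd hp.2.2 (not_lt.mpr (le_of_lt hp'.2.2))
  have hcard : (Finset.univ.filter (fun p => P p ∧ p.1 < p.2)).card =
      (Finset.univ.filter (fun p => P p ∧ p.2 < p.1)).card := by
    apply Finset.card_bij' (fun p _ => Prod.swap p) (fun p _ => Prod.swap p) <;>
      simp only [Finset.mem_filter, Finset.mem_univ, true_and, Prod.fst_swap, Prod.snd_swap,
        Prod.swap_swap, hP] <;>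
    · intro p hp
      first
        | exact ⟨⟨hp.1.1.symm, hp.1.2.2, hp.1.2.1⟩, hp.2⟩
        | trivial
  rw [hsplit, Finset.card_union_of_disjoint hdisj, hcard]
  exact ⟨_, rfl⟩

/-- the cut of a vertex set -/
noncomputable def cutN {n : ℕ} (G : SimpleGraph (Fin n)) (X : Finset (Fin n)) : ℕ :=
  EE G X Xᶜ

lemma cutN_parity {d : ℕ} (hreg : IsRegularGraph G d) (X : Finset (Fin n)) :
    cutN G X + EE G X X = d * X.card := by
  rw [← EE_univ_right hreg X, cutN]
  have h1 : (Finset.univ : Finset (Fin n)) = X ∪ Xᶜ := by simp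
  rw [h1, EE_union_right X disjoint_compl_right, Nat.add_comm]

lemma cutN_even {d : ℕ} (hreg : IsRegularGraph G d) (hdeven : ¬ Odd d) (X : Finset (Fin n)) :
    cutN G X % 2 = 0 := by
  have h1 := cutN_parity hreg X
  obtain ⟨m, hm⟩ := EE_self_even (G := G) X
  rw [Nat.not_odd_iff_even] at hdeven
  obtain ⟨e, he⟩ := hdeven
  have h2 : d * X.card = 2 * (e * X.card) := by rw [he]; ring
  omega

lemma cutN_singleton {d : ℕ} (hreg : IsRegularGraph G d) (x : Fin n) :
    cutN G {x} = d := by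
  have h1 := cutN_parity hreg {x}
  rw [EE_singleton_self, Finset.card_singleton] at h1
  omega

lemma cutN_compl (X : Finset (Fin n)) : cutN G Xᶜ = cutN G X := by
  unfold cutN
  rw [compl_compl, EE_comm]

lemma EE_singleton_le_one (x y : Fin n) : EE G {x} {y} ≤ 1 := by
  unfold EE
  have : ((Finset.univ : Finset (Fin n × Fin n)).filter
      (fun p => G.Adj p.1 p.2 ∧ p.1 ∈ ({x} : Finset (Fin n)) ∧ p.2 ∈ ({y} : Finset (Fin n))))
      ⊆ {(x, y)} := by
    intro p hp
    simp only [Finset.mem_filter, Finset.mem_singleton, Finset.mem_univ, true_and] at hp ⊢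
    exact Prod.ext hp.2.1 hp.2.2
  calc _ ≤ ({(x,y)} : Finset (Fin n × Fin n)).card := Finset.card_le_card this
    _ = 1 := Finset.card_singleton _

lemma edgeBoundary_ncard_eq (H : G.Subgraph) (X : Finset (Fin n)) (hX : H.verts = ↑X) :
    (edgeBoundary G H).ncard = cutN G X := by
  classical
  have himg : edgeBoundary G H =
      (fun p : Fin n × Fin n => s(p.1, p.2)) ''
        ↑((Finset.univ : Finset (Fin n × Fin n)).filter
          (fun p => G.Adj p.1 p.2 ∧ p.1 ∈ X ∧ p.2 ∈ Xᶜ)) := by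
    ext e
    simp only [edgeBoundary, Set.mem_setOf_eq, Set.mem_image, Finset.mem_coe,
      Finset.mem_filter, Finset.mem_univ, true_and, Finset.mem_compl, hX]
    constructor
    · rintro ⟨u, v, rfl, hadj, hu, hv⟩
      exact ⟨(u, v), ⟨hadj, by simpa using hu, by simpa using hv⟩, rfl⟩
    · rintro ⟨p, ⟨hadj, hu, hv⟩, rfl⟩
      exact ⟨p.1, p.2, rfl, hadj, by simpa using hu, by simpa using hv⟩
  have hinj : Set.InjOn (fun p : Fin n × Fin n => s(p.1, p.2))
      ↑((Finset.univ : Finset (Fin n × Fin n)).filter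
        (fun p => G.Adj p.1 p.2 ∧ p.1 ∈ X ∧ p.2 ∈ Xᶜ)) := by
    intro p hp q hq heq
    simp only [Finset.coe_filter, Set.mem_setOf_eq, Finset.mem_univ, true_and,
      Finset.mem_compl] at hp hq
    simp only at heq
    rcases Sym2.eq_iff.mp heq with ⟨h1, h2⟩ | ⟨h1, h2⟩
    · exact Prod.ext h1 h2
    · exact absurd (h1 ▸ hp.2.1) hq.2.2
  rw [himg, Set.ncard_image_of_injOn hinj, Set.ncard_coe_finset]
  rfl

/-- subgraph with vertex set X (and all induced edges) -/
def sgOf (G : SimpleGraph (Fin n)) (X : Finset (Fin n)) : G.Subgraph where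
  verts := ↑X
  Adj := fun a b => a ∈ X ∧ b ∈ X ∧ G.Adj a b
  adj_sub := fun h => h.2.2
  edge_vert := fun h => h.1
  symm := ⟨fun a b h => ⟨h.2.1, h.1, h.2.2.symm⟩⟩

lemma Delta_lb (d : ℕ) : d + 1 ≤ Delta d := by
  unfold Delta; split <;> omega

lemma Delta_ub (d : ℕ) : Delta d ≤ d + 2 := by
  unfold Delta; split <;> omega

lemma cutN_lb_two {d : ℕ} (hd : 3 ≤ d) (hreg : IsRegularGraph G d)
    {X : Finset (Fin n)} (h2 : X.card = 2) : Delta d ≤ cutN G X := by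
  obtain ⟨x, y, hxy, rfl⟩ := Finset.card_eq_two.mp h2
  have hpar := cutN_parity hreg ({x, y} : Finset (Fin n))
  have hsplit : ({x, y} : Finset (Fin n)) = {x} ∪ {y} := by
    ext z; simp
  have hdisjxy : Disjoint ({x} : Finset (Fin n)) ({y} : Finset (Fin n)) :=
    Finset.disjoint_singleton.mpr hxy
  have hEE : EE G ({x, y} : Finset (Fin n)) ({x, y} : Finset (Fin n)) ≤ 2 := by
    rw [hsplit, EE_union_left hdisjxy,
      EE_union_right _ hdisjxy, EE_union_right _ hdisjxy]
    have h1 := EE_singleton_self (G := G) x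
    have h2 := EE_singleton_self (G := G) y
    have h3 := EE_singleton_le_one (G := G) x y
    have h4 := EE_singleton_le_one (G := G) y x
    omega
  rw [h2] at hpar
  rcases Nat.even_or_odd d with he | ho
  · have : Delta d = d + 2 := by
      unfold Delta
      rw [if_neg (by simpa using he)]
    obtain ⟨e, hee⟩ := he
    omega
  · have : Delta d = d + 1 := by
      unfold Delta
      rw [if_pos ho]
    omega

lemma cutN_lb {d : ℕ} (hd : 3 ≤ d) (hreg : IsRegularGraph G d) (hls : LocallySparse G d)
    {X : Finset (Fin n)} (h2 : 2 ≤ X.card) (h2' : X.card + 2 ≤ n) : Delta d ≤ cutN G X := by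
  rcases eq_or_lt_of_le h2 with heq | h3
  · exact cutN_lb_two hd hreg heq.symm
  by_cases hup : X.card ≤ n - 3
  · -- use local sparsity
    have hsub : (sgOf G X).verts = ↑X := rfl
    have hncard : (sgOf G X).verts.ncard = X.card := by
      rw [hsub, Set.ncard_coe_finset]
    have hlb := hls (sgOf G X) (by omega) (by omega)
    rw [edgeBoundary_ncard_eq (sgOf G X) X hsub] at hlb
    rcases Nat.even_or_odd d with he | ho
    · have hΔ : Delta d = d + 2 := by
        unfold Delta
        rw [if_neg (by simpa using he)]
      have hpar := cutN_even hreg (by simpa using he) X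
      have hd2 : d % 2 = 0 := Nat.even_iff.mp he
      omega
    · have hΔ : Delta d = d + 1 := by unfold Delta; rw [if_pos ho]
      omega
  · -- complement has card 2
    have hcompl : Xᶜ.card = 2 := by
      have := Finset.card_compl X
      rw [Fintype.card_fin] at this
      omega
    rw [← cutN_compl]
    exact cutN_lb_two hd hreg hcompl

lemma EE_mono_right {X Y Y' : Finset (Fin n)} (h : Y ⊆ Y') : EE G X Y ≤ EE G X Y' := by
  unfold EE
  apply Finset.card_le_card
  intro p hp
  simp only [Finset.mem_filter, Finset.mem_univ, true_and] at hp ⊢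
  exact ⟨hp.1, hp.2.1, h hp.2.2⟩

lemma EE_insert_self {X : Finset (Fin n)} {z : Fin n} (hz : z ∉ X) :
    EE G (X ∪ {z}) (X ∪ {z}) = EE G X X + 2 * EE G X {z} := by
  have hdisj : Disjoint X ({z} : Finset (Fin n)) := Finset.disjoint_singleton_right.mpr hz
  rw [EE_union_left hdisj, EE_union_right _ hdisj, EE_union_right _ hdisj,
    EE_singleton_self, EE_comm {z} X]
  omega

lemma card_union_singleton {X : Finset (Fin n)} {z : Fin n} (hz : z ∉ X) :
    (X ∪ {z}).card = X.card + 1 := by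
  rw [Finset.card_union_of_disjoint (Finset.disjoint_singleton_right.mpr hz),
    Finset.card_singleton]

lemma subcase1 {d : ℕ} (hd : 3 ≤ d) (hreg : IsRegularGraph G d)
    {S : Finset (Fin n)} {a b c u w : Fin n}
    (haS : a ∉ S) (hbS : b ∉ S) (hcS : c ∉ S)
    (hab : a ≠ b) (hac : a ≠ c) (hbc : b ≠ c)
    (huS : u ∈ S) (hwS : w ∉ S) (hwa : w ≠ a) (hwb : w ≠ b) (hwc : w ≠ c)
    (hadj : G.Adj u w)
    (hScut : Delta d ≤ cutN G S)
    (hA : cutN G (S ∪ {a}) = Delta d)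
    (hB : cutN G (S ∪ {b}) = Delta d)
    (hC : cutN G (S ∪ {c}) = Delta d) : False := by
  have eqS := cutN_parity hreg S
  have eqA := cutN_parity hreg (S ∪ {a})
  have eqB := cutN_parity hreg (S ∪ {b})
  have eqC := cutN_parity hreg (S ∪ {c})
  rw [EE_insert_self haS, card_union_singleton haS, hA] at eqA
  rw [EE_insert_self hbS, card_union_singleton hbS, hB] at eqB
  rw [EE_insert_self hcS, card_union_singleton hcS, hC] at eqC
  -- lower bound on cutN G S from edges to a, b, c, w
  have hsub : ({a} ∪ ({b} ∪ ({c} ∪ {w})) : Finset (Fin n)) ⊆ Sᶜ := by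
    intro z hz
    simp only [Finset.mem_union, Finset.mem_singleton] at hz
    rw [Finset.mem_compl]
    rcases hz with rfl | rfl | rfl | rfl <;> assumption
  have hd1 : Disjoint ({b} : Finset (Fin n)) ({c} ∪ {w}) := by
    simp [Finset.disjoint_left, hbc, hwb.symm]
  have hd2 : Disjoint ({c} : Finset (Fin n)) ({w} : Finset (Fin n)) := by
    simp [Finset.disjoint_left, hwc.symm]
  have hd0 : Disjoint ({a} : Finset (Fin n)) ({b} ∪ ({c} ∪ {w})) := by
    simp [Finset.disjoint_left, hab, hac, hwa.symm]
  have hlow : EE G S {a} + EE G S {b} + EE G S {c} + 1 ≤ cutN G S := by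
    have h1 : EE G S ({a} ∪ ({b} ∪ ({c} ∪ {w}))) ≤ cutN G S := EE_mono_right hsub
    rw [EE_union_right _ hd0, EE_union_right _ hd1, EE_union_right _ hd2] at h1
    have h2 : 1 ≤ EE G S {w} := EE_pos huS (Finset.mem_singleton_self w) hadj
    omega
  have hΔub := Delta_ub d
  have hring : d * (S.card + 1) = d * S.card + d := by ring
  omega

lemma subcase2 {d : ℕ} (hd : 3 ≤ d) (hreg : IsRegularGraph G d)
    {T : Finset (Fin n)} {x a b u w : Fin n}
    (hxT : x ∉ T) (haT : a ∉ T) (hbT : b ∉ T)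
    (hax : a ≠ x) (hbx : b ≠ x) (hab : a ≠ b)
    (huT : u ∈ T) (hwT : w ∉ T) (hwx : w ≠ x) (hwa : w ≠ a) (hwb : w ≠ b)
    (hadj : G.Adj u w)
    (hA : cutN G (T ∪ {x} ∪ {a}) = Delta d)
    (hB : cutN G (T ∪ {x} ∪ {b}) = Delta d)
    (hC : cutN G (T ∪ {a} ∪ {b}) = Delta d)
    (hScut : Delta d ≤ cutN G (T ∪ {x}))
    (hABcut : Delta d ≤ cutN G (T ∪ {x} ∪ {a} ∪ {b})) : False := by
  have haTx : a ∉ T ∪ {x} := by simp [haT, hax]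
  have hbTx : b ∉ T ∪ {x} := by simp [hbT, hbx]
  have haTb? : b ∉ T ∪ {a} := by simp [hbT, hab.symm]
  have hbTxa : b ∉ T ∪ {x} ∪ {a} := by simp [hbT, hbx, hab.symm]
  -- parity identities
  have eqS := cutN_parity hreg (T ∪ {x})
  have eqA := cutN_parity hreg (T ∪ {x} ∪ {a})
  have eqB := cutN_parity hreg (T ∪ {x} ∪ {b})
  have eqC := cutN_parity hreg (T ∪ {a} ∪ {b})
  have eqAB := cutN_parity hreg (T ∪ {x} ∪ {a} ∪ {b})
  have eqT := cutN_parity hreg T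
  -- expand the self-edge counts
  rw [EE_insert_self hxT, card_union_singleton hxT] at eqS
  rw [EE_insert_self haTx, card_union_singleton haTx, card_union_singleton hxT,
    EE_insert_self hxT, EE_union_left (Finset.disjoint_singleton_right.mpr hxT), hA] at eqA
  rw [EE_insert_self hbTx, card_union_singleton hbTx, card_union_singleton hxT,
    EE_insert_self hxT, EE_union_left (Finset.disjoint_singleton_right.mpr hxT), hB] at eqB
  rw [EE_insert_self haTb?, card_union_singleton haTb?, card_union_singleton haT,
    EE_insert_self haT, EE_union_left (Finset.disjoint_singleton_right.mpr haT), hC] at eqC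
  rw [EE_insert_self hbTxa, card_union_singleton hbTxa, card_union_singleton haTx,
    card_union_singleton hxT, EE_insert_self haTx, EE_insert_self hxT,
    EE_union_left (Finset.disjoint_singleton_right.mpr hxT),
    EE_union_left (Finset.disjoint_singleton_right.mpr haTx)] at eqAB
  rw [EE_union_left (Finset.disjoint_singleton_right.mpr hxT)] at eqAB
  -- lower bound on cutN G T from edges to x, a, b, w
  have hsub : ({x} ∪ ({a} ∪ ({b} ∪ {w})) : Finset (Fin n)) ⊆ Tᶜ := by
    intro z hz
    simp only [Finset.mem_union, Finset.mem_singleton] at hz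
    rw [Finset.mem_compl]
    rcases hz with rfl | rfl | rfl | rfl <;> assumption
  have hd1 : Disjoint ({a} : Finset (Fin n)) ({b} ∪ {w}) := by
    simp [Finset.disjoint_left, hab, hwa.symm]
  have hd2 : Disjoint ({b} : Finset (Fin n)) ({w} : Finset (Fin n)) := by
    simp [Finset.disjoint_left, hwb.symm]
  have hd0 : Disjoint ({x} : Finset (Fin n)) ({a} ∪ ({b} ∪ {w})) := by
    simp [Finset.disjoint_left, hax.symm, hbx.symm, hwx.symm]
  have hlow : EE G T {x} + EE G T {a} + EE G T {b} + 1 ≤ cutN G T := by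
    have h1 : EE G T ({x} ∪ ({a} ∪ ({b} ∪ {w}))) ≤ cutN G T := EE_mono_right hsub
    rw [EE_union_right _ hd0, EE_union_right _ hd1, EE_union_right _ hd2] at h1
    have h2 : 1 ≤ EE G T {w} := EE_pos huT (Finset.mem_singleton_self w) hadj
    omega
  have hΔub := Delta_ub d
  have hr1 : d * (T.card + 1) = d * T.card + d := by ring
  have hr2 : d * (T.card + 1 + 1) = d * T.card + d + d := by ring
  have hr3 : d * (T.card + 1 + 1 + 1) = d * T.card + d + d + d := by ring
  omega

lemma EE_self_split {X Y Z : Finset (Fin n)} (hdisj : Disjoint Y Z) (h : Y ∪ Z = X) :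
    EE G X X = EE G Y Y + 2 * EE G Y Z + EE G Z Z := by
  rw [← h, EE_union_left hdisj, EE_union_right _ hdisj, EE_union_right _ hdisj,
    EE_comm Z Y]
  omega

lemma diff_card_one {d v : ℕ} (hd : 3 ≤ d) (hreg : IsRegularGraph G d)
    (hls : LocallySparse G d) (hvn : v + 3 ≤ n)
    {A B : Finset (Fin n)} {u w : Fin n}
    (hAcard : A.card = v) (hBcard : B.card = v)
    (hAcut : cutN G A = Delta d) (hBcut : cutN G B = Delta d)
    (huA : u ∈ A) (huB : u ∈ B) (hwA : w ∉ A) (hwB : w ∉ B)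
    (hadj : G.Adj u w) (hne : A ≠ B) : (A \ B).card = 1 := by
  have hP1A : Disjoint (A ∩ B) (A \ B) := by
    rw [Finset.disjoint_left]
    intro z hz hz'
    exact (Finset.mem_sdiff.mp hz').2 (Finset.mem_inter.mp hz).2
  have hP1B : Disjoint (A ∩ B) (B \ A) := by
    rw [Finset.disjoint_left]
    intro z hz hz'
    exact (Finset.mem_sdiff.mp hz').2 (Finset.mem_inter.mp hz).1
  have hsplitA : (A ∩ B) ∪ (A \ B) = A := by
    rw [Finset.union_comm]; exact Finset.sdiff_union_inter A B
  have hsplitB : (A ∩ B) ∪ (B \ A) = B := by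
    rw [Finset.union_comm, Finset.inter_comm]; exact Finset.sdiff_union_inter B A
  have hcardA : (A ∩ B).card + (A \ B).card = v := by
    rw [← Finset.card_union_of_disjoint hP1A, hsplitA, hAcard]
  have hcardB : (A ∩ B).card + (B \ A).card = v := by
    rw [← Finset.card_union_of_disjoint hP1B, hsplitB, hBcard]
  -- A \ B is nonempty
  have hne1 : (A \ B).Nonempty := by
    rw [Finset.sdiff_nonempty]
    intro hsub
    exact hne (Finset.eq_of_subset_of_card_le hsub (le_of_eq (hBcard.trans hAcard.symm)))
  have h1le : 1 ≤ (A \ B).card := Finset.card_pos.mpr hne1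
  by_contra hcon
  have h2le : 2 ≤ (A \ B).card := by omega
  have h2le' : 2 ≤ (B \ A).card := by omega
  -- lower bounds on the cuts of the difference sets
  have hlbAB : Delta d ≤ cutN G (A \ B) := cutN_lb hd hreg hls h2le (by omega)
  have hlbBA : Delta d ≤ cutN G (B \ A) := cutN_lb hd hreg hls h2le' (by omega)
  -- parity identities
  have eqA := cutN_parity hreg A
  have eqB := cutN_parity hreg B
  have eqP1 := cutN_parity hreg (A ∩ B)
  have eqP2 := cutN_parity hreg (A \ B)
  have eqP3 := cutN_parity hreg (B \ A)
  -- expand the self-edge counts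
  have expA := EE_self_split (G := G) hP1A hsplitA
  have expB := EE_self_split (G := G) hP1B hsplitB
  -- lower bound on the cut of the intersection
  have hwP : w ∉ A \ B := fun h => hwA (Finset.mem_sdiff.mp h).1
  have hwP' : w ∉ B \ A := fun h => hwB (Finset.mem_sdiff.mp h).1
  have hd23 : Disjoint (A \ B) ((B \ A) ∪ {w}) := by
    rw [Finset.disjoint_union_right, Finset.disjoint_singleton_right]
    refine ⟨?_, hwP⟩
    rw [Finset.disjoint_left]
    intro z hz hz'
    exact (Finset.mem_sdiff.mp hz').2 (Finset.mem_sdiff.mp hz).1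
  have hd3w : Disjoint (B \ A) ({w} : Finset (Fin n)) :=
    Finset.disjoint_singleton_right.mpr hwP'
  have hsubP1 : ((A \ B) ∪ ((B \ A) ∪ {w}) : Finset (Fin n)) ⊆ (A ∩ B)ᶜ := by
    intro z hz
    rw [Finset.mem_compl, Finset.mem_inter]
    simp only [Finset.mem_union, Finset.mem_singleton, Finset.mem_sdiff] at hz
    rintro ⟨hzA, hzB⟩
    rcases hz with ⟨-, h⟩ | ⟨-, h⟩ | rfl
    · exact h hzB
    · exact h hzA
    · exact hwA hzA
  have hlowP1 : EE G (A ∩ B) (A \ B) + EE G (A ∩ B) (B \ A) + 1 ≤ cutN G (A ∩ B) := by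
    have h1 : EE G (A ∩ B) ((A \ B) ∪ ((B \ A) ∪ {w})) ≤ cutN G (A ∩ B) :=
      EE_mono_right hsubP1
    rw [EE_union_right _ hd23, EE_union_right _ hd3w] at h1
    have h2 : 1 ≤ EE G (A ∩ B) {w} :=
      EE_pos (Finset.mem_inter.mpr ⟨huA, huB⟩) (Finset.mem_singleton_self w) hadj
    omega
  -- linearize the multiplications
  have hr1 : d * A.card = d * (A ∩ B).card + d * (A \ B).card := by
    rw [hAcard, ← hcardA]; ring
  have hr2 : d * B.card = d * (A ∩ B).card + d * (B \ A).card := by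
    rw [hBcard, ← hcardB]; ring
  omega

lemma per_edge {d v : ℕ} (hd : 3 ≤ d) (hreg : IsRegularGraph G d)
    (hls : LocallySparse G d) (hv3 : 3 ≤ v) (hvn : v + 3 ≤ n)
    {u w : Fin n} (hadj : G.Adj u w) :
    ((Finset.univ : Finset (Finset (Fin n))).filter
      (fun A => A.card = v ∧ cutN G A = Delta d ∧ u ∈ A ∧ w ∉ A)).card ≤ 2 := by
  by_contra hcon
  push_neg at hcon
  obtain ⟨A, B, C, hA, hB, hC, hABne, hACne, hBCne⟩ := Finset.two_lt_card_iff.mp hcon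
  simp only [Finset.mem_filter, Finset.mem_univ, true_and] at hA hB hC
  obtain ⟨hAv, hAcut, huA, hwA⟩ := hA
  obtain ⟨hBv, hBcut, huB, hwB⟩ := hB
  obtain ⟨hCv, hCcut, huC, hwC⟩ := hC
  have hAB1 := diff_card_one hd hreg hls hvn hAv hBv hAcut hBcut huA huB hwA hwB hadj hABne
  have hBA1 := diff_card_one hd hreg hls hvn hBv hAv hBcut hAcut huB huA hwB hwA hadj hABne.symm
  have hCA1 := diff_card_one hd hreg hls hvn hCv hAv hCcut hAcut huC huA hwC hwA hadj hACne.symm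
  have hAC1 := diff_card_one hd hreg hls hvn hAv hCv hAcut hCcut huA huC hwA hwC hadj hACne
  have hBC1 := diff_card_one hd hreg hls hvn hBv hCv hBcut hCcut huB huC hwB hwC hadj hBCne
  obtain ⟨a, ha⟩ := Finset.card_eq_one.mp hAB1
  obtain ⟨b, hb⟩ := Finset.card_eq_one.mp hBA1
  have haA : a ∈ A := (Finset.mem_sdiff.mp (ha ▸ Finset.mem_singleton_self a)).1
  have haB : a ∉ B := (Finset.mem_sdiff.mp (ha ▸ Finset.mem_singleton_self a)).2
  have hbB : b ∈ B := (Finset.mem_sdiff.mp (hb ▸ Finset.mem_singleton_self b)).1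
  have hbA : b ∉ A := (Finset.mem_sdiff.mp (hb ▸ Finset.mem_singleton_self b)).2
  set S := A ∩ B with hSdef
  have hSA : S ∪ {a} = A := by
    have h1 : (A ∩ B) ∪ (A \ B) = A := by
      rw [Finset.union_comm]; exact Finset.sdiff_union_inter A B
    rw [ha] at h1; exact h1
  have hSB : S ∪ {b} = B := by
    have h1 : (B ∩ A) ∪ (B \ A) = B := by
      rw [Finset.union_comm]; exact Finset.sdiff_union_inter B A
    rw [hb, Finset.inter_comm] at h1; exact h1
  have haS : a ∉ S := fun h => haB (Finset.mem_inter.mp h).2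
  have hbS : b ∉ S := fun h => hbA (Finset.mem_inter.mp h).1
  have hab : a ≠ b := fun h => haB (h ▸ hbB)
  have huS : u ∈ S := Finset.mem_inter.mpr ⟨huA, huB⟩
  have hwS : w ∉ S := fun h => hwA (Finset.mem_inter.mp h).1
  have hwa : w ≠ a := fun h => hwA (h ▸ haA)
  have hwb : w ≠ b := fun h => hwB (h ▸ hbB)
  have hScard : S.card + 1 = v := by
    rw [← hAv, ← hSA, card_union_singleton haS]
  have hScut : Delta d ≤ cutN G S := cutN_lb hd hreg hls (by omega) (by omega)
  by_cases haC : a ∈ C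
  · by_cases hbC : b ∈ C
    · -- C = (S \ {x}) ∪ {a} ∪ {b} : subcase 2
      have hCA : C \ A = {b} := by
        obtain ⟨z, hz⟩ := Finset.card_eq_one.mp hCA1
        have hbz : b ∈ ({z} : Finset (Fin n)) := hz ▸ Finset.mem_sdiff.mpr ⟨hbC, hbA⟩
        rw [hz, Finset.mem_singleton.mp hbz]
      obtain ⟨x, hx⟩ := Finset.card_eq_one.mp hAC1
      have hxA : x ∈ A := (Finset.mem_sdiff.mp (hx ▸ Finset.mem_singleton_self x)).1
      have hxC : x ∉ C := (Finset.mem_sdiff.mp (hx ▸ Finset.mem_singleton_self x)).2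
      have hxa : x ≠ a := fun h => hxC (h ▸ haC)
      have hxS : x ∈ S := by
        have h1 : x ∈ S ∪ {a} := hSA ▸ hxA
        rcases Finset.mem_union.mp h1 with h | h
        · exact h
        · exact absurd (Finset.mem_singleton.mp h) hxa
      set T := S \ {x} with hTdef
      have hxT : x ∉ T := fun h => (Finset.mem_sdiff.mp h).2 (Finset.mem_singleton_self x)
      have hTx : T ∪ {x} = S := by
        ext z
        simp only [Finset.mem_union, Finset.mem_sdiff, Finset.mem_singleton, hTdef]
        constructor
        · rintro (⟨h1, -⟩ | rfl)
          · exact h1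
          · exact hxS
        · intro hz
          by_cases hzx : z = x
          · exact Or.inr hzx
          · exact Or.inl ⟨hz, hzx⟩
      have hCeq : T ∪ {a} ∪ {b} = C := by
        ext z
        simp only [Finset.mem_union, Finset.mem_sdiff, Finset.mem_singleton, hTdef]
        constructor
        · rintro ((⟨hzS, hzx⟩ | rfl) | rfl)
          · -- z ∈ S, z ≠ x ⇒ z ∈ C
            have hzA : z ∈ A := hSA ▸ Finset.mem_union_left _ hzS
            by_contra hzC
            have : z ∈ A \ C := Finset.mem_sdiff.mpr ⟨hzA, hzC⟩
            rw [hx] at this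
            exact hzx (Finset.mem_singleton.mp this)
          · exact haC
          · exact hbC
        · intro hzC
          by_cases hzA : z ∈ A
          · have h1 : z ∈ S ∪ {a} := hSA ▸ hzA
            rcases Finset.mem_union.mp h1 with h | h
            · by_cases hzx : z = x
              · exact absurd (hzx ▸ hzC) hxC
              · exact Or.inl (Or.inl ⟨h, hzx⟩)
            · exact Or.inl (Or.inr (Finset.mem_singleton.mp h))
          · have : z ∈ C \ A := Finset.mem_sdiff.mpr ⟨hzC, hzA⟩
            rw [hCA] at this
            exact Or.inr (Finset.mem_singleton.mp this)
      have haT : a ∉ T := fun h => haS (Finset.mem_sdiff.mp h).1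
      have hbT : b ∉ T := fun h => hbS (Finset.mem_sdiff.mp h).1
      have hbx : b ≠ x := fun h => hbS (h ▸ hxS)
      have huT : u ∈ T := Finset.mem_sdiff.mpr ⟨huS, fun h => hxC ((Finset.mem_singleton.mp h) ▸ huC)⟩
      have hwT : w ∉ T := fun h => hwS (Finset.mem_sdiff.mp h).1
      have hwx : w ≠ x := fun h => hwA (h ▸ hxA)
      have hA2 : cutN G (T ∪ {x} ∪ {a}) = Delta d := by
        rw [hTx, hSA]; exact hAcut
      have hB2 : cutN G (T ∪ {x} ∪ {b}) = Delta d := by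
        rw [hTx, hSB]; exact hBcut
      have hC2 : cutN G (T ∪ {a} ∪ {b}) = Delta d := by
        rw [hCeq]; exact hCcut
      have hScut2 : Delta d ≤ cutN G (T ∪ {x}) := by rw [hTx]; exact hScut
      have hABcard : (A ∪ {b}).card = v + 1 := by
        rw [card_union_singleton hbA, hAv]
      have hABcut : Delta d ≤ cutN G (T ∪ {x} ∪ {a} ∪ {b}) := by
        have heq : T ∪ {x} ∪ {a} ∪ {b} = A ∪ {b} := by rw [hTx, hSA]
        rw [heq]
        exact cutN_lb hd hreg hls (by omega) (by omega)
      exact subcase2 hd hreg hxT haT hbT hxa.symm hbx hab huT hwT hwx hwa hwb hadj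
        hA2 hB2 hC2 hScut2 hABcut
    · -- a ∈ C, b ∉ C : then A ⊆ C, contradiction
      have hBC : B \ C = {b} := by
        obtain ⟨z, hz⟩ := Finset.card_eq_one.mp hBC1
        have hbz : b ∈ ({z} : Finset (Fin n)) := hz ▸ Finset.mem_sdiff.mpr ⟨hbB, hbC⟩
        rw [hz, Finset.mem_singleton.mp hbz]
      have hSC : S ⊆ C := by
        intro z hzS
        by_contra hzC
        have : z ∈ B \ C := Finset.mem_sdiff.mpr ⟨(Finset.mem_inter.mp hzS).2, hzC⟩
        rw [hBC] at this
        exact hbS ((Finset.mem_singleton.mp this) ▸ hzS)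
      have hACsub : A ⊆ C := by
        rw [← hSA]
        exact Finset.union_subset hSC (Finset.singleton_subset_iff.mpr haC)
      exact hACne (Finset.eq_of_subset_of_card_le hACsub (by omega))
  · -- a ∉ C : C = S ∪ {c}, subcase 1
    have hAC : A \ C = {a} := by
      obtain ⟨z, hz⟩ := Finset.card_eq_one.mp hAC1
      have haz : a ∈ ({z} : Finset (Fin n)) := hz ▸ Finset.mem_sdiff.mpr ⟨haA, haC⟩
      rw [hz, Finset.mem_singleton.mp haz]
    obtain ⟨c, hc⟩ := Finset.card_eq_one.mp hCA1
    have hcC : c ∈ C := (Finset.mem_sdiff.mp (hc ▸ Finset.mem_singleton_self c)).1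
    have hcA : c ∉ A := (Finset.mem_sdiff.mp (hc ▸ Finset.mem_singleton_self c)).2
    have hSC : S ⊆ C := by
      intro z hzS
      by_contra hzC
      have : z ∈ A \ C := Finset.mem_sdiff.mpr ⟨(Finset.mem_inter.mp hzS).1, hzC⟩
      rw [hAC] at this
      exact haS ((Finset.mem_singleton.mp this) ▸ hzS)
    have hCeq : S ∪ {c} = C := by
      ext z
      simp only [Finset.mem_union, Finset.mem_singleton]
      constructor
      · rintro (hzS | rfl)
        · exact hSC hzS
        · exact hcC
      · intro hzC
        by_cases hzA : z ∈ A
        · have h1 : z ∈ S ∪ {a} := hSA ▸ hzA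
          rcases Finset.mem_union.mp h1 with h | h
          · exact Or.inl h
          · exact absurd ((Finset.mem_singleton.mp h) ▸ hzC) haC
        · have : z ∈ C \ A := Finset.mem_sdiff.mpr ⟨hzC, hzA⟩
          rw [hc] at this
          exact Or.inr (Finset.mem_singleton.mp this)
    have hcS : c ∉ S := fun h => hcA (Finset.mem_inter.mp h).1
    have hac : a ≠ c := fun h => haC (h ▸ hcC)
    have hbc : b ≠ c := by
      intro h
      apply hBCne
      rw [← hSB, ← hCeq, h]
    have hwc : w ≠ c := fun h => hwC (h ▸ hcC)
    have hA2 : cutN G (S ∪ {a}) = Delta d := by rw [hSA]; exact hAcut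
    have hB2 : cutN G (S ∪ {b}) = Delta d := by rw [hSB]; exact hBcut
    have hC2 : cutN G (S ∪ {c}) = Delta d := by rw [hCeq]; exact hCcut
    exact subcase1 hd hreg haS hbS hcS hab hac hbc huS hwS hwa hwb hwc hadj hScut hA2 hB2 hC2

/-- For every `3 ≤ v ≤ n - 3`, the number of closed subgraphs of a locally sparse
`d`-regular graph `G` contained in the induced subgraph on `[k] = {0, …, k-1}` and having
`v` vertices is at most `2dk/3`. -/
theorem count_closed_subgraphs_in_initial_segment {n d : ℕ} (hd : 3 ≤ d)
    (G : SimpleGraph (Fin n)) (hreg : IsRegularGraph G d) (hls : LocallySparse G d)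
    (k v : ℕ) (h3 : 3 ≤ v) (hv : v ≤ n - 3) :
    3 * {H : G.Subgraph | IsClosedSubgraph G d H ∧ H.verts.ncard = v ∧
        H.verts ⊆ {u : Fin n | u.val < k}}.ncard ≤ 2 * d * k := by
  classical
  have hn6 : 6 ≤ n := by omega
  have hvn : v + 3 ≤ n := by omega
  set SH := {H : G.Subgraph | IsClosedSubgraph G d H ∧ H.verts.ncard = v ∧
      H.verts ⊆ {u : Fin n | u.val < k}} with hSHdef
  set 𝒜 := (Finset.univ : Finset (Finset (Fin n))).filter
      (fun A => A.card = v ∧ cutN G A = Delta d ∧ ∀ x ∈ A, x.val < k) with h𝒜def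
  -- Step 1: SH.ncard ≤ 𝒜.card
  have hstep1 : SH.ncard ≤ 𝒜.card := by
    set φ : G.Subgraph → Finset (Fin n) := fun H => H.verts.toFinset with hφ
    have hinj : Set.InjOn φ SH := by
      intro H1 h1 H2 h2 heq
      have hverts : H1.verts = H2.verts := by
        rwa [hφ, Set.toFinset_inj] at heq
      have hadj : H1.Adj = H2.Adj := by
        funext x y
        apply propext
        constructor
        · intro h
          exact h2.1.1 (hverts ▸ H1.edge_vert h) (hverts ▸ H1.edge_vert h.symm) (H1.adj_sub h)
        · intro h
          exact h1.1.1 (hverts ▸ H2.edge_vert h) (hverts ▸ H2.edge_vert h.symm) (H2.adj_sub h)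
      exact SimpleGraph.Subgraph.ext hverts hadj
    have himg : φ '' SH ⊆ ↑𝒜 := by
      rintro _ ⟨H, hH, rfl⟩
      obtain ⟨⟨hind, hcut⟩, hncard, hsub⟩ := hH
      simp only [h𝒜def, Finset.coe_filter, Set.mem_setOf_eq, Finset.mem_univ, true_and]
      refine ⟨?_, ?_, ?_⟩
      · rw [hφ, ← Set.ncard_eq_toFinset_card', hncard]
      · rw [← edgeBoundary_ncard_eq H (φ H) (Set.coe_toFinset H.verts).symm, hcut]
      · intro x hx
        exact hsub (by rwa [hφ, Set.mem_toFinset] at hx)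
    calc SH.ncard = (φ '' SH).ncard := (Set.ncard_image_of_injOn hinj).symm
      _ ≤ (↑𝒜 : Set (Finset (Fin n))).ncard :=
          Set.ncard_le_ncard himg (Finset.finite_toSet 𝒜)
      _ = 𝒜.card := Set.ncard_coe_finset 𝒜
  -- Step 2: double counting
  have hsum : 𝒜.card * Delta d ≤ 2 * (d * k) := by
    have hcount : ∀ A, cutN G A = ∑ p ∈ (Finset.univ : Finset (Fin n × Fin n)),
        if G.Adj p.1 p.2 ∧ p.1 ∈ A ∧ p.2 ∈ Aᶜ then 1 else 0 := by
      intro A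
      exact Finset.card_filter _ _
    set Kf := (Finset.univ : Finset (Fin n)).filter (fun x : Fin n => x.val < k) with hKf
    have hKfcard : Kf.card ≤ k := by
      have h1 : Kf.card ≤ (Finset.range k).card := by
        apply Finset.card_le_card_of_injOn (fun x => x.val)
        · intro x hx
          simp only [hKf, Finset.mem_coe, Finset.mem_filter] at hx
          simp [hx.2]
        · intro x _ y _ h
          exact Fin.val_injective h
      simpa using h1
    calc 𝒜.card * Delta d = ∑ A ∈ 𝒜, cutN G A := by
          rw [Finset.sum_congr rfl (fun A hA => by
            simp only [h𝒜def, Finset.mem_filter] at hA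
            exact hA.2.2.1), Finset.sum_const, smul_eq_mul]
      _ = ∑ A ∈ 𝒜, ∑ p ∈ (Finset.univ : Finset (Fin n × Fin n)),
            (if G.Adj p.1 p.2 ∧ p.1 ∈ A ∧ p.2 ∈ Aᶜ then 1 else 0) :=
          Finset.sum_congr rfl (fun A _ => hcount A)
      _ = ∑ p ∈ (Finset.univ : Finset (Fin n × Fin n)), ∑ A ∈ 𝒜,
            (if G.Adj p.1 p.2 ∧ p.1 ∈ A ∧ p.2 ∈ Aᶜ then 1 else 0) := Finset.sum_comm
      _ ≤ ∑ p ∈ (Finset.univ : Finset (Fin n × Fin n)),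
            (if G.Adj p.1 p.2 ∧ p.1.val < k then 2 else 0) := by
          apply Finset.sum_le_sum
          intro p _
          rw [← Finset.card_filter]
          by_cases hc : G.Adj p.1 p.2 ∧ p.1.val < k
          · rw [if_pos hc]
            refine le_trans (Finset.card_le_card ?_) (per_edge hd hreg hls h3 hvn hc.1)
            intro A hA
            simp only [Finset.mem_filter, h𝒜def, Finset.mem_univ, true_and,
              Finset.mem_compl] at hA ⊢
            exact ⟨hA.1.1, hA.1.2.1, hA.2.2.1, hA.2.2.2⟩
          · rw [if_neg hc]
            rw [Finset.card_eq_zero.mpr, Nat.le_zero]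
            apply Finset.eq_empty_of_forall_notMem
            intro A hA
            simp only [Finset.mem_filter, h𝒜def, Finset.mem_univ, true_and] at hA
            exact hc ⟨hA.2.1, hA.1.2.2 p.1 hA.2.2.1⟩
      _ = 2 * ((Finset.univ : Finset (Fin n × Fin n)).filter
            (fun p => G.Adj p.1 p.2 ∧ p.1.val < k)).card := by
          rw [Finset.card_filter, Finset.mul_sum]
          apply Finset.sum_congr rfl
          intro p _
          split <;> ring
      _ = 2 * EE G Kf Finset.univ := by
          congr 1
          unfold EE
          congr 1
          ext p
          simp [hKf]
      _ = 2 * (d * Kf.card) := by rw [EE_univ_right hreg]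
      _ ≤ 2 * (d * k) := by
          have := Nat.mul_le_mul_left d hKfcard
          omega
  have hΔ3 : 3 ≤ Delta d := le_trans (by omega) (Delta_lb d)
  calc 3 * SH.ncard ≤ 𝒜.card * Delta d := by
        have h1 : 3 * SH.ncard ≤ 3 * 𝒜.card := Nat.mul_le_mul_left 3 hstep1
        have h2 : 𝒜.card * 3 ≤ 𝒜.card * Delta d := Nat.mul_le_mul_left _ hΔ3
        omega
    _ ≤ 2 * (d * k) := hsum
    _ = 2 * d * k := by ring
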